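/- Let (λ_1,…,λ_p; π_0,π_1,…,π_p) be a spectral system for A, let m ∈ ℕ satisfy (A − λ_j·1)^{m+1}·π_j = 0 for every j, and define X := ∑_{j=1}^{p} ∑_{i=0}^{m} (−1)^i·(λ_j⁻¹)^{i+1} · (A − λ_j·1)^i · π_j. Then for every natural number k ≥ 1: X^k = ∑_{j=1}^{p} ∑_{i=0}^{m} (−1)^i · C(k+i−1, i) · (λ_j⁻¹)^{k+i} · (A − λ_j·1)^i · π_j. (Equivalently, the k-th power of the Drazin inverse of A is obtained by substituting −k for k in the geometric part of the P-canonical form of A, since C(−k,i) = (−1)^i C(k+i−1,i).) -/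

import Mathlib

open Finset


lemma hockey (k s : ℕ) : ∑ i ∈ range (s + 1), (k + i).choose i = (k + 1 + s).choose s := by
  induction s with
  | zero => simp
  | succ s ih =>
    rw [Finset.sum_range_succ, ih]
    have h3 : k + (s + 1) = k + s + 1 := by omega
    have h1 : k + 1 + s = k + s + 1 := by omega
    have h2 : k + 1 + (s + 1) = (k + s + 1) + 1 := by omega
    rw [h3, h1, h2, Nat.choose_succ_succ (k + s + 1) s]

lemma conv_sum {F M : Type*} [Field F] [AddCommMonoid M] [Module F M]
    (m : ℕ) (a b : ℕ → F) (T : ℕ → M) (hT : ∀ t, m < t → T t = 0) :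
    ∑ i ∈ range (m + 1), ∑ i' ∈ range (m + 1), (a i * b i') • T (i + i') =
      ∑ s ∈ range (m + 1), (∑ i ∈ range (s + 1), a i * b (s - i)) • T s := by
  rw [← Finset.sum_product']
  have hsub : ((range (m+1)).biUnion fun s => Finset.HasAntidiagonal.antidiagonal s) ⊆
      range (m+1) ×ˢ range (m+1) := by
    intro q hq
    simp only [Finset.mem_biUnion, Finset.mem_range, Finset.HasAntidiagonal.mem_antidiagonal] at hq
    obtain ⟨s, hs, hqs⟩ := hq
    simp only [Finset.mem_product, Finset.mem_range]
    omega
  rw [← Finset.sum_subset hsub (by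
    intro q hq hnq
    simp only [Finset.mem_biUnion, Finset.mem_range, Finset.HasAntidiagonal.mem_antidiagonal,
      not_exists, not_and] at hnq
    have : m < q.1 + q.2 := by
      by_contra h
      exact hnq (q.1 + q.2) (by omega) rfl
    rw [hT _ this, smul_zero])]
  rw [Finset.sum_biUnion (by
    intro x hx y hy hxy
    simp only [Finset.disjoint_left, Finset.HasAntidiagonal.mem_antidiagonal]
    intro q h1 h2
    exact hxy (h1 ▸ h2))]
  refine Finset.sum_congr rfl fun s hs => ?_
  rw [← Finset.Nat.sum_antidiagonal_eq_sum_range_succ (fun i i' => a i * b i'), Finset.sum_smul]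
  refine Finset.sum_congr rfl fun q hq => ?_
  rw [Finset.HasAntidiagonal.mem_antidiagonal] at hq
  rw [hq]


/-- The powers of the Drazin inverse of `A` are obtained by substituting `-k` for `k` in the
geometric part of the `P`-canonical form of `A`: for `k ≥ 1`,
`X^k = ∑_j ∑_{i=0}^{m} (-1)^i C(k+i-1,i) λ_j^{-(k+i)} (A - λ_j)^i π_j`. -/
theorem drazin_candidate_pow_eq
    (F : Type*) [Field F] (n : Type*) [Fintype n] [DecidableEq n] [Nonempty n]
    (A : Matrix n n F) (p : ℕ)
    (lam : Fin p → F) (π : Fin (p + 1) → Matrix n n F)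
    (hlam : ∀ j, lam j ≠ 0)
    (hsum : ∑ a, π a = 1)
    (horth : ∀ a b, a ≠ b → π a * π b = 0)
    (hidem : ∀ a, π a * π a = π a)
    (hcomm : ∀ a, A * π a = π a * A)
    (m : ℕ) (hm : ∀ j : Fin p, (A - lam j • 1) ^ (m + 1) * π j.succ = 0) :
    ∀ k : ℕ, 1 ≤ k →
      (∑ j : Fin p, ∑ i ∈ Finset.range (m + 1),
          ((-1 : F) ^ i * (lam j)⁻¹ ^ (i + 1)) • ((A - lam j • 1) ^ i * π j.succ)) ^ k =
        ∑ j : Fin p, ∑ i ∈ Finset.range (m + 1),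
          ((-1 : F) ^ i * ((k + i - 1).choose i : F) * (lam j)⁻¹ ^ (k + i)) •
            ((A - lam j • 1) ^ i * π j.succ) := by
  have hBP : ∀ (j j' : Fin p), Commute (A - lam j' • 1) (π j.succ) := by
    intro j j'
    have : Commute A (π j.succ) := hcomm j.succ
    exact (this.sub_left (Commute.smul_left (Commute.one_left _) _))
  have hEmul : ∀ (j j' : Fin p) (i i' : ℕ),
      ((A - lam j • 1) ^ i * π j.succ) * ((A - lam j' • 1) ^ i' * π j'.succ) =
      if j = j' then (A - lam j • 1) ^ (i + i') * π j.succ else 0 := by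
    intro j j' i i'
    have hcom : π j.succ * (A - lam j' • 1) ^ i' = (A - lam j' • 1) ^ i' * π j.succ :=
      ((hBP j j').pow_left i').symm.eq
    by_cases h : j = j'
    · subst h
      rw [if_pos rfl, mul_assoc, ← mul_assoc (π j.succ), hcom, mul_assoc, hidem,
        ← mul_assoc, ← pow_add]
    · rw [if_neg h, mul_assoc, ← mul_assoc (π j.succ), hcom, mul_assoc,
        horth _ _ (fun hh => h (Fin.succ_injective p hh)), mul_zero, mul_zero]
  have hEzero : ∀ (j : Fin p) (t : ℕ), m < t → (A - lam j • 1) ^ t * π j.succ = 0 := by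
    intro j t ht
    have : t = (t - (m+1)) + (m+1) := by omega
    rw [this, pow_add, mul_assoc, hm j, mul_zero]
  intro k hk
  induction k, hk using Nat.le_induction with
  | base =>
    rw [pow_one]
    refine Finset.sum_congr rfl fun j _ => Finset.sum_congr rfl fun i _ => ?_
    have h1 : 1 + i - 1 = i := by omega
    rw [h1, Nat.choose_self, Nat.cast_one, mul_one, add_comm i 1]
  | succ k hk ih =>
    rw [pow_succ, ih, Finset.sum_mul_sum]
    refine Finset.sum_congr rfl fun j _ => ?_
    rw [Finset.sum_eq_single j
      (fun j' _ hne => by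
        rw [Finset.sum_mul_sum]
        refine Finset.sum_eq_zero fun i _ => Finset.sum_eq_zero fun i' _ => ?_
        rw [smul_mul_smul_comm, hEmul, if_neg hne.symm, smul_zero])
      (fun h => absurd (Finset.mem_univ j) h)]
    rw [Finset.sum_mul_sum]
    have step : ∀ i ∈ range (m+1), ∀ i' ∈ range (m+1),
        (((-1 : F) ^ i * ((k + i - 1).choose i : F) * (lam j)⁻¹ ^ (k + i)) •
            ((A - lam j • 1) ^ i * π j.succ)) *
        (((-1 : F) ^ i' * (lam j)⁻¹ ^ (i' + 1)) • ((A - lam j • 1) ^ i' * π j.succ)) =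
        (((-1 : F) ^ i * ((k + i - 1).choose i : F) * (lam j)⁻¹ ^ (k + i)) *
          ((-1 : F) ^ i' * (lam j)⁻¹ ^ (i' + 1))) •
          ((A - lam j • 1) ^ (i + i') * π j.succ) := by
      intro i _ i' _
      rw [smul_mul_smul_comm, hEmul, if_pos rfl]
    rw [Finset.sum_congr rfl (fun i hi => Finset.sum_congr rfl (fun i' hi' => step i hi i' hi'))]
    rw [conv_sum m _ _ _ (hEzero j)]
    refine Finset.sum_congr rfl fun s hs => ?_
    congr 1
    have key : ∀ i ∈ range (s+1),
        ((-1 : F) ^ i * ((k + i - 1).choose i : F) * (lam j)⁻¹ ^ (k + i)) *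
          ((-1 : F) ^ (s - i) * (lam j)⁻¹ ^ ((s - i) + 1)) =
        (((k - 1 + i).choose i : F)) * ((-1 : F) ^ s * (lam j)⁻¹ ^ (k + 1 + s)) := by
      intro i hi
      rw [Finset.mem_range] at hi
      have e1 : k + i - 1 = k - 1 + i := by omega
      have e2 : (-1 : F) ^ i * (-1 : F) ^ (s - i) = (-1 : F) ^ s := by
        rw [← pow_add]; congr 1; omega
      have e3 : (lam j)⁻¹ ^ (k + i) * (lam j)⁻¹ ^ ((s - i) + 1) = (lam j)⁻¹ ^ (k + 1 + s) := by
        rw [← pow_add]; congr 1; omega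
      calc ((-1 : F) ^ i * ((k + i - 1).choose i : F) * (lam j)⁻¹ ^ (k + i)) *
            ((-1 : F) ^ (s - i) * (lam j)⁻¹ ^ ((s - i) + 1))
          = ((k + i - 1).choose i : F) * (((-1 : F) ^ i * (-1 : F) ^ (s - i)) *
              ((lam j)⁻¹ ^ (k + i) * (lam j)⁻¹ ^ ((s - i) + 1))) := by ring
        _ = (((k - 1 + i).choose i : F)) * ((-1 : F) ^ s * (lam j)⁻¹ ^ (k + 1 + s)) := by
              rw [e1, e2, e3]
    rw [Finset.sum_congr rfl key, ← Finset.sum_mul, ← Nat.cast_sum, hockey (k - 1) s]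
    have e4 : k - 1 + 1 = k := by omega
    have e5 : k + 1 + s - 1 = k + s := by omega
    rw [e4, e5]
    ring
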